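/- arXiv:2007.13612 — 2 statements merged into one kernel-verified Lean document; each statement's English description precedes it below -/
import Mathlib

section
/- For a standard normal random variable z and any real constants a, b, the expectation E[z · min(1, e^{az+b})] equals a · e^{a²/2 + b} · Φ(−b/|a| − |a|), where Φ is the standard normal cumulative distribution function. -/
open MeasureTheory Real ProbabilityTheory

/-- The standard normal cumulative distribution function. -/
noncomputable def stdNormalCDF (x : ℝ) : ℝ :=
  (Real.sqrt (2 * Real.pi))⁻¹ * ∫ t in Set.Iic x, Real.exp (-t ^ 2 / 2)

open Set Filter

namespace GaussHelpers

lemma integrable_exp_half : Integrable (fun x : ℝ => Real.exp (-x ^ 2 / 2)) := by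
  have h : (fun x : ℝ => Real.exp (-x ^ 2 / 2)) = fun x : ℝ => Real.exp (-(1/2) * x ^ 2) := by
    funext x; ring_nf
  rw [h]; exact integrable_exp_neg_mul_sq (by norm_num)

lemma integrable_mul_exp_half : Integrable (fun x : ℝ => x * Real.exp (-x ^ 2 / 2)) := by
  have h : (fun x : ℝ => x * Real.exp (-x ^ 2 / 2))
      = fun x : ℝ => x * Real.exp (-(1/2) * x ^ 2) := by
    funext x; ring_nf
  rw [h]; exact integrable_mul_exp_neg_mul_sq (by norm_num)

lemma exp_complete_square (a b x : ℝ) :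
    Real.exp (a * x + b - x ^ 2 / 2)
      = Real.exp (b + a ^ 2 / 2) * Real.exp (-(x - a) ^ 2 / 2) := by
  rw [← Real.exp_add]; congr 1; ring

lemma integrable_shift_mul (a b : ℝ) :
    Integrable (fun x : ℝ => (x - a) * Real.exp (a * x + b - x ^ 2 / 2)) := by
  have h : (fun x : ℝ => (x - a) * Real.exp (a * x + b - x ^ 2 / 2))
      = fun x : ℝ => Real.exp (b + a ^ 2 / 2) * ((x - a) * Real.exp (-(x - a) ^ 2 / 2)) := by
    funext x; rw [exp_complete_square]; ring
  rw [h]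
  exact (integrable_mul_exp_half.comp_sub_right a).const_mul _

lemma integrable_exp_shift (a b : ℝ) :
    Integrable (fun x : ℝ => Real.exp (a * x + b - x ^ 2 / 2)) := by
  have h : (fun x : ℝ => Real.exp (a * x + b - x ^ 2 / 2))
      = fun x : ℝ => Real.exp (b + a ^ 2 / 2) * Real.exp (-(x - a) ^ 2 / 2) := by
    funext x; rw [exp_complete_square]
  rw [h]
  exact (integrable_exp_half.comp_sub_right a).const_mul _

lemma hasDerivAt_negexp (a b x : ℝ) :
    HasDerivAt (fun x : ℝ => -Real.exp (a * x + b - x ^ 2 / 2))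
      ((x - a) * Real.exp (a * x + b - x ^ 2 / 2)) x := by
  have h1 : HasDerivAt (fun x : ℝ => a * x + b - x ^ 2 / 2) (a - x) x := by
    have hA : HasDerivAt (fun x : ℝ => a * x + b) a x := by
      simpa using ((hasDerivAt_id x).const_mul a).add_const b
    have hB : HasDerivAt (fun x : ℝ => x ^ 2 / 2) x x := by
      have := (hasDerivAt_pow 2 x).div_const 2
      simpa using this
    exact hA.sub hB
  have : HasDerivAt (fun x => -Real.exp (a * x + b - x ^ 2 / 2))
      (-(Real.exp (a * x + b - x ^ 2 / 2) * (a - x))) x := (h1.exp).neg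
  convert this using 1; ring

lemma tendsto_E_atTop : Tendsto (fun y : ℝ => Real.exp (-y ^ 2 / 2)) atTop (nhds 0) := by
  apply Real.tendsto_exp_atBot.comp
  have h1 : Tendsto (fun y : ℝ => y ^ 2) atTop atTop := tendsto_pow_atTop two_ne_zero
  have h2 : Tendsto (fun y : ℝ => y ^ 2 / 2) atTop atTop := h1.atTop_div_const (by norm_num)
  have := tendsto_neg_atTop_atBot.comp h2
  simpa [Function.comp_def, neg_div] using this

lemma tendsto_E_atBot : Tendsto (fun y : ℝ => Real.exp (-y ^ 2 / 2)) atBot (nhds 0) := by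
  apply Real.tendsto_exp_atBot.comp
  have h1 : Tendsto (fun y : ℝ => y ^ 2) atBot atTop := by
    have := (tendsto_pow_atTop (α := ℝ) two_ne_zero).comp tendsto_neg_atBot_atTop
    simpa [Function.comp_def] using this
  have h2 : Tendsto (fun y : ℝ => y ^ 2 / 2) atBot atTop := h1.atTop_div_const (by norm_num)
  have := tendsto_neg_atTop_atBot.comp h2
  simpa [Function.comp_def, neg_div] using this

lemma tendsto_exp_shift_atTop (a b : ℝ) :
    Tendsto (fun x : ℝ => -Real.exp (a * x + b - x ^ 2 / 2)) atTop (nhds 0) := by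
  rw [show (0 : ℝ) = -(Real.exp (b + a ^ 2 / 2) * 0) by ring]
  apply Tendsto.neg
  simp only [exp_complete_square]
  apply Tendsto.const_mul
  exact tendsto_E_atTop.comp (tendsto_atTop_add_const_right atTop (-a) tendsto_id)

lemma tendsto_exp_shift_atBot (a b : ℝ) :
    Tendsto (fun x : ℝ => -Real.exp (a * x + b - x ^ 2 / 2)) atBot (nhds 0) := by
  rw [show (0 : ℝ) = -(Real.exp (b + a ^ 2 / 2) * 0) by ring]
  apply Tendsto.neg
  simp only [exp_complete_square]
  apply Tendsto.const_mul
  exact tendsto_E_atBot.comp (tendsto_atBot_add_const_right atBot (-a) tendsto_id)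

lemma key_Iic (a b c : ℝ) :
    ∫ x in Iic c, (x - a) * Real.exp (a * x + b - x ^ 2 / 2)
      = -Real.exp (a * c + b - c ^ 2 / 2) := by
  have := integral_Iic_of_hasDerivAt_of_tendsto' (a := c)
    (f := fun x : ℝ => -Real.exp (a * x + b - x ^ 2 / 2))
    (fun x _ => hasDerivAt_negexp a b x)
    (integrable_shift_mul a b).integrableOn (tendsto_exp_shift_atBot a b)
  simpa using this

lemma key_Ioi (a b c : ℝ) :
    ∫ x in Ioi c, (x - a) * Real.exp (a * x + b - x ^ 2 / 2)
      = Real.exp (a * c + b - c ^ 2 / 2) := by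
  have := integral_Ioi_of_hasDerivAt_of_tendsto' (a := c)
    (f := fun x : ℝ => -Real.exp (a * x + b - x ^ 2 / 2))
    (fun x _ => hasDerivAt_negexp a b x)
    (integrable_shift_mul a b).integrableOn (tendsto_exp_shift_atTop a b)
  simpa using this

lemma shift_Iic (f : ℝ → ℝ) (c d : ℝ) :
    ∫ x in Iic c, f x = ∫ x in Iic (c - d), f (x + d) := by
  have A : MeasurableEmbedding (fun x : ℝ => x + d) :=
    (Homeomorph.addRight d).isClosedEmbedding.measurableEmbedding
  have B := A.setIntegral_map (μ := volume) f (Iic c)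
  rw [map_add_right_eq_self (volume : Measure ℝ) d] at B
  rw [B]
  congr 1
  ext x
  simp [add_comm, le_sub_iff_add_le]

lemma shift_Ioi (f : ℝ → ℝ) (c d : ℝ) :
    ∫ x in Ioi c, f x = ∫ x in Ioi (c - d), f (x + d) := by
  have A : MeasurableEmbedding (fun x : ℝ => x + d) :=
    (Homeomorph.addRight d).isClosedEmbedding.measurableEmbedding
  have B := A.setIntegral_map (μ := volume) f (Ioi c)
  rw [map_add_right_eq_self (volume : Measure ℝ) d] at B
  rw [B]
  congr 1
  ext x
  simp [sub_lt_iff_lt_add]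

lemma exp_int_Iic (a b c : ℝ) :
    ∫ x in Iic c, Real.exp (a * x + b - x ^ 2 / 2)
      = Real.exp (b + a ^ 2 / 2) * ∫ x in Iic (c - a), Real.exp (-x ^ 2 / 2) := by
  simp only [exp_complete_square]
  rw [integral_const_mul _ _]
  congr 1
  rw [shift_Iic (fun x => Real.exp (-(x - a) ^ 2 / 2)) c a]
  simp

lemma exp_int_Ioi (a b c : ℝ) :
    ∫ x in Ioi c, Real.exp (a * x + b - x ^ 2 / 2)
      = Real.exp (b + a ^ 2 / 2) * ∫ x in Ioi (c - a), Real.exp (-x ^ 2 / 2) := by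
  simp only [exp_complete_square]
  rw [integral_const_mul _ _]
  congr 1
  rw [shift_Ioi (fun x => Real.exp (-(x - a) ^ 2 / 2)) c a]
  simp

lemma mul_exp_int_Iic (a b c : ℝ) :
    ∫ x in Iic c, x * Real.exp (a * x + b - x ^ 2 / 2)
      = -Real.exp (a * c + b - c ^ 2 / 2)
        + a * (Real.exp (b + a ^ 2 / 2) * ∫ x in Iic (c - a), Real.exp (-x ^ 2 / 2)) := by
  have h : (fun x : ℝ => x * Real.exp (a * x + b - x ^ 2 / 2))
      = fun x : ℝ => (x - a) * Real.exp (a * x + b - x ^ 2 / 2)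
          + a * Real.exp (a * x + b - x ^ 2 / 2) := by
    funext x; ring
  rw [h, integral_add (integrable_shift_mul a b).integrableOn
    (((integrable_exp_shift a b).const_mul a).integrableOn), key_Iic,
    integral_const_mul _ _, exp_int_Iic]

lemma mul_exp_int_Ioi (a b c : ℝ) :
    ∫ x in Ioi c, x * Real.exp (a * x + b - x ^ 2 / 2)
      = Real.exp (a * c + b - c ^ 2 / 2)
        + a * (Real.exp (b + a ^ 2 / 2) * ∫ x in Ioi (c - a), Real.exp (-x ^ 2 / 2)) := by
  have h : (fun x : ℝ => x * Real.exp (a * x + b - x ^ 2 / 2))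
      = fun x : ℝ => (x - a) * Real.exp (a * x + b - x ^ 2 / 2)
          + a * Real.exp (a * x + b - x ^ 2 / 2) := by
    funext x; ring
  rw [h, integral_add (integrable_shift_mul a b).integrableOn
    (((integrable_exp_shift a b).const_mul a).integrableOn), key_Ioi,
    integral_const_mul _ _, exp_int_Ioi]

lemma mul_exp_int_Iic' (c : ℝ) :
    ∫ x in Iic c, x * Real.exp (-x ^ 2 / 2) = -Real.exp (-c ^ 2 / 2) := by
  have := key_Iic 0 0 c
  simp only [zero_mul, zero_add, zero_sub, sub_zero] at this
  simpa [neg_div] using this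

lemma mul_exp_int_Ioi' (c : ℝ) :
    ∫ x in Ioi c, x * Real.exp (-x ^ 2 / 2) = Real.exp (-c ^ 2 / 2) := by
  have := key_Ioi 0 0 c
  simp only [zero_mul, zero_add, zero_sub, sub_zero] at this
  simpa [neg_div] using this

lemma integral_gaussian_density (f : ℝ → ℝ) :
    ∫ z, f z ∂(gaussianReal 0 1)
      = ∫ z, ((Real.sqrt (2 * Real.pi))⁻¹ * Real.exp (-z ^ 2 / 2)) * f z := by
  rw [gaussianReal_of_var_ne_zero _ one_ne_zero]
  have hd : gaussianPDF 0 1 = fun x => ((gaussianPDFReal 0 1 x).toNNReal : ENNReal) := by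
    funext x; rfl
  rw [hd, integral_withDensity_eq_integral_smul
    ((measurable_gaussianPDFReal 0 1).real_toNNReal)]
  congr 1
  funext x
  rw [NNReal.smul_def, smul_eq_mul, Real.coe_toNNReal _ (gaussianPDFReal_nonneg 0 1 x)]
  congr 2
  simp [gaussianPDFReal, neg_div]

lemma integrable_main (a b : ℝ) :
    Integrable (fun z : ℝ => Real.exp (-z ^ 2 / 2) * (z * min 1 (Real.exp (a * z + b)))) := by
  apply Integrable.mono' integrable_mul_exp_half.abs
  · apply Continuous.aestronglyMeasurable
    fun_prop
  · filter_upwards with z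
    have hm0 : (0 : ℝ) ≤ min 1 (Real.exp (a * z + b)) :=
      le_min one_pos.le (Real.exp_pos _).le
    have hm1 : min 1 (Real.exp (a * z + b)) ≤ 1 := min_le_left _ _
    rw [Real.norm_eq_abs, abs_mul, abs_mul, Real.abs_exp, abs_of_nonneg hm0, abs_mul,
      Real.abs_exp]
    calc Real.exp (-z ^ 2 / 2) * (|z| * min 1 (Real.exp (a * z + b)))
        ≤ Real.exp (-z ^ 2 / 2) * (|z| * 1) := by
          apply mul_le_mul_of_nonneg_left _ (Real.exp_pos _).le
          exact mul_le_mul_of_nonneg_left hm1 (abs_nonneg _)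
      _ = |z| * Real.exp (-z ^ 2 / 2) := by ring

end GaussHelpers

open GaussHelpers

/-- For `z ~ N(0,1)` and real constants `a ≠ 0`, `b`,
`E[z · min(1, e^{az+b})] = a e^{a²/2 + b} Φ(-b/|a| - |a|)`. -/
theorem expectation_min_exp_gaussian (a b : ℝ) (ha : a ≠ 0) :
    ∫ z, z * min 1 (Real.exp (a * z + b)) ∂(gaussianReal 0 1)
      = a * Real.exp (a ^ 2 / 2 + b) * stdNormalCDF (-b / |a| - |a|) := by
  rw [integral_gaussian_density]
  have hfac : (fun z : ℝ => ((Real.sqrt (2 * Real.pi))⁻¹ * Real.exp (-z ^ 2 / 2))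
        * (z * min 1 (Real.exp (a * z + b))))
      = fun z : ℝ => (Real.sqrt (2 * Real.pi))⁻¹
        * (Real.exp (-z ^ 2 / 2) * (z * min 1 (Real.exp (a * z + b)))) := by
    funext z; ring
  rw [hfac, integral_const_mul _ _]
  set c : ℝ := -b / a with hc
  have hc0 : a * c + b = 0 := by rw [hc]; field_simp; ring
  have hsplit : ∫ z, Real.exp (-z ^ 2 / 2) * (z * min 1 (Real.exp (a * z + b)))
      = (∫ z in Iic c, Real.exp (-z ^ 2 / 2) * (z * min 1 (Real.exp (a * z + b))))
        + ∫ z in Ioi c, Real.exp (-z ^ 2 / 2) * (z * min 1 (Real.exp (a * z + b))) :=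
    (intervalIntegral.integral_Iic_add_Ioi (integrable_main a b).integrableOn
      (integrable_main a b).integrableOn).symm
  rw [hsplit]
  rcases ha.lt_or_gt with hneg | hpos
  · -- a < 0
    have p1 : ∫ z in Iic c, Real.exp (-z ^ 2 / 2) * (z * min 1 (Real.exp (a * z + b)))
        = ∫ z in Iic c, z * Real.exp (-z ^ 2 / 2) := by
      apply setIntegral_congr_fun measurableSet_Iic
      intro z hz
      dsimp only
      have hz' : 0 ≤ a * z + b := by
        have h1 : a * z ≥ a * c := mul_le_mul_of_nonpos_left hz hneg.le
        nlinarith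
      rw [min_eq_left (Real.one_le_exp hz')]
      ring
    have p2 : ∫ z in Ioi c, Real.exp (-z ^ 2 / 2) * (z * min 1 (Real.exp (a * z + b)))
        = ∫ z in Ioi c, z * Real.exp (a * z + b - z ^ 2 / 2) := by
      apply setIntegral_congr_fun measurableSet_Ioi
      intro z hz
      dsimp only
      have hz' : a * z + b ≤ 0 := by
        have h1 : a * z ≤ a * c := mul_le_mul_of_nonpos_left (le_of_lt hz) hneg.le
        nlinarith
      rw [min_eq_right (Real.exp_le_one_iff.mpr hz')]
      have hE : Real.exp (-z ^ 2 / 2) * Real.exp (a * z + b)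
          = Real.exp (a * z + b - z ^ 2 / 2) := by
        rw [← Real.exp_add]; congr 1; ring
      linear_combination z * hE
    rw [p1, p2, mul_exp_int_Iic' c, mul_exp_int_Ioi a b c,
      show a * c + b - c ^ 2 / 2 = -c ^ 2 / 2 by rw [show a * c + b - c ^ 2 / 2
        = (a * c + b) - c ^ 2 / 2 by ring, hc0]; ring]
    have hflip : ∫ x in Ioi (c - a), Real.exp (-x ^ 2 / 2)
        = ∫ x in Iic (-(c - a)), Real.exp (-x ^ 2 / 2) := by
      rw [← integral_comp_neg_Ioi (c - a) (fun x => Real.exp (-x ^ 2 / 2))]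
      simp
    rw [hflip]
    have harg : -b / |a| - |a| = -(c - a) := by
      rw [abs_of_neg hneg, hc]; field_simp; ring
    rw [stdNormalCDF, harg, show Real.exp (a ^ 2 / 2 + b) = Real.exp (b + a ^ 2 / 2)
      by rw [add_comm]]
    ring
  · -- 0 < a
    have p1 : ∫ z in Iic c, Real.exp (-z ^ 2 / 2) * (z * min 1 (Real.exp (a * z + b)))
        = ∫ z in Iic c, z * Real.exp (a * z + b - z ^ 2 / 2) := by
      apply setIntegral_congr_fun measurableSet_Iic
      intro z hz
      dsimp only
      have hz' : a * z + b ≤ 0 := by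
        have h1 : a * z ≤ a * c := mul_le_mul_of_nonneg_left hz hpos.le
        nlinarith
      rw [min_eq_right (Real.exp_le_one_iff.mpr hz')]
      have hE : Real.exp (-z ^ 2 / 2) * Real.exp (a * z + b)
          = Real.exp (a * z + b - z ^ 2 / 2) := by
        rw [← Real.exp_add]; congr 1; ring
      linear_combination z * hE
    have p2 : ∫ z in Ioi c, Real.exp (-z ^ 2 / 2) * (z * min 1 (Real.exp (a * z + b)))
        = ∫ z in Ioi c, z * Real.exp (-z ^ 2 / 2) := by
      apply setIntegral_congr_fun measurableSet_Ioi
      intro z hz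
      dsimp only
      have hz' : 0 ≤ a * z + b := by
        have h1 : a * c ≤ a * z := mul_le_mul_of_nonneg_left (le_of_lt hz) hpos.le
        nlinarith
      rw [min_eq_left (Real.one_le_exp hz')]
      ring
    rw [p1, p2, mul_exp_int_Ioi' c, mul_exp_int_Iic a b c,
      show a * c + b - c ^ 2 / 2 = -c ^ 2 / 2 by rw [show a * c + b - c ^ 2 / 2
        = (a * c + b) - c ^ 2 / 2 by ring, hc0]; ring]
    have harg : -b / |a| - |a| = c - a := by
      rw [abs_of_pos hpos, hc]
    rw [stdNormalCDF, harg, show Real.exp (a ^ 2 / 2 + b) = Real.exp (b + a ^ 2 / 2)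
      by rw [add_comm]]
    ring
end

section
/- Let w₁,…,w_N be i.i.d. standard normal random variables, λ₁,…,λ_N ≥ 0, and k a positive integer. Then E[(Σ_{i=1}^N λ_i² w_i²)^k] ≤ (2k−1)!! · (Σ_{i=1}^N λ_i²)^k. -/
open MeasureTheory ProbabilityTheory Nat Real Set Filter
open scoped NNReal ENNReal

lemma intPowGauss (n : ℕ) :
    Integrable (fun x : ℝ => x ^ n * Real.exp (-(1/2) * x ^ 2)) := by
  have h := integrable_rpow_mul_exp_neg_mul_sq (b := 1/2) (by norm_num)
    (s := (n : ℝ)) (lt_of_lt_of_le (by norm_num) (Nat.cast_nonneg n))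
  simpa [Real.rpow_natCast] using h

lemma gaussRec (m : ℕ) :
    ∫ x : ℝ, x ^ (2*m+2) * Real.exp (-(1/2) * x ^ 2)
      = (2*m+1) * ∫ x : ℝ, x ^ (2*m) * Real.exp (-(1/2) * x ^ 2) := by
  set e : ℝ → ℝ := fun x => Real.exp (-(1/2) * x ^ 2) with he
  set f : ℝ → ℝ := fun x => x ^ (2*m+1) * e x with hf
  set g : ℝ → ℝ := fun x => (2*m+1 : ℝ) * (x ^ (2*m) * e x) - x ^ (2*m+2) * e x with hg
  have hderiv : ∀ x : ℝ, HasDerivAt f (g x) x := by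
    intro x
    have h1 : HasDerivAt (fun y : ℝ => y ^ (2*m+1)) (((2*m+1 : ℕ) : ℝ) * x ^ (2*m)) x := by
      simpa using hasDerivAt_pow (2*m+1) x
    have h2 : HasDerivAt e (Real.exp (-(1/2) * x ^ 2) * (-(1/2) * (2 * x))) x := by
      have h3 : HasDerivAt (fun y : ℝ => -(1/2 : ℝ) * y ^ 2) (-(1/2 : ℝ) * (2 * x)) x := by
        simpa using (hasDerivAt_pow 2 x).const_mul (-(1/2) : ℝ)
      simpa [he] using h3.exp
    have h4 : HasDerivAt f _ x := h1.mul h2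
    convert h4 using 1
    simp only [hg, he]
    push_cast
    ring
  have hgint : Integrable g := ((intPowGauss (2*m)).const_mul _).sub (intPowGauss (2*m+2))
  have htop : Tendsto f atTop (nhds 0) := by
    have ho := rpow_mul_exp_neg_mul_sq_isLittleO_exp_neg (b := 1/2) (by norm_num)
      ((2*m+1 : ℕ) : ℝ)
    have ho' : f =o[atTop] fun x : ℝ => Real.exp (-(1/2) * x) := by
      have hfe : f = fun x : ℝ => x ^ (((2*m+1 : ℕ)) : ℝ) * Real.exp (-(1/2) * x ^ 2) := by
        funext x; rw [Real.rpow_natCast]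
      rw [hfe]; exact ho
    refine ho'.tendsto_zero_of_tendsto (y := (0:ℝ)) ?_
    have : Tendsto (fun x : ℝ => -(1/2 : ℝ) * x) atTop atBot :=
      tendsto_id.const_mul_atTop_of_neg (by norm_num)
    exact Real.tendsto_exp_atBot.comp this
  have hIoi : ∫ x in Ioi (0:ℝ), g x = 0 - f 0 :=
    integral_Ioi_of_hasDerivAt_of_tendsto' (fun x _ => hderiv x) hgint.integrableOn htop
  have f0 : f 0 = 0 := by simp [hf]
  have geven : ∀ x : ℝ, g (-x) = g x := by
    intro x
    have h1 : (-x) ^ (2*m) = x ^ (2*m) := Even.neg_pow ⟨m, by ring⟩ x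
    have h2 : (-x) ^ (2*m+2) = x ^ (2*m+2) := Even.neg_pow ⟨m+1, by ring⟩ x
    simp only [hg, he, h1, h2, neg_sq]
  have hIic : ∫ x in Iic (0:ℝ), g x = ∫ x in Ioi (0:ℝ), g x := by
    have := integral_comp_neg_Iic (0:ℝ) g
    rw [neg_zero] at this
    rw [← this]
    exact integral_congr_ae (ae_of_all _ fun x => (geven x).symm)
  have htotal : ∫ x : ℝ, g x = 0 := by
    rw [← intervalIntegral.integral_Iic_add_Ioi (hgint.integrableOn) (hgint.integrableOn), hIic, hIoi, f0]
    ring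
  have hsub : ∫ x : ℝ, g x
      = (2*m+1 : ℝ) * (∫ x : ℝ, x ^ (2*m) * e x) - ∫ x : ℝ, x ^ (2*m+2) * e x := by
    rw [hg]
    rw [integral_sub ((intPowGauss (2*m)).const_mul _) (intPowGauss (2*m+2)),
      integral_const_mul]
  rw [htotal] at hsub
  linarith

lemma gaussMomentAux (k : ℕ) :
    ∫ x : ℝ, x ^ (2*k) * Real.exp (-(1/2) * x ^ 2)
      = ((2*k-1)‼ : ℝ) * ∫ x : ℝ, Real.exp (-(1/2) * x ^ 2) := by
  induction k with
  | zero => simp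
  | succ n ih =>
    have h2 : ((2*n+1)‼ : ℕ) = (2*n+1) * (2*n-1)‼ := by
      cases n with
      | zero => rfl
      | succ j =>
        rw [show 2*(j+1)+1 = (2*(j+1)-1)+2 by omega, Nat.doubleFactorial_add_two]
    rw [show 2*(n+1) = 2*n+2 by ring, gaussRec n, ih,
      show 2*n+2-1 = 2*n+1 by omega, h2]
    push_cast
    ring

lemma gaussPt (k : ℕ) (x : ℝ) :
    ((Real.toNNReal (gaussianPDFReal 0 1 x) : ℝ≥0) : ℝ) * (x ^ (2*k))
      = (Real.sqrt (2*Real.pi))⁻¹ * (x ^ (2*k) * Real.exp (-(1/2) * x ^ 2)) := by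
  rw [Real.coe_toNNReal _ (gaussianPDFReal_nonneg 0 1 x)]
  rw [gaussianPDFReal]
  have : -(x - 0) ^ 2 / (2 * ((1:ℝ≥0):ℝ)) = -(1/2) * x ^ 2 := by
    push_cast
    ring
  rw [this]
  push_cast
  ring

lemma gaussMoment (k : ℕ) :
    ∫ x : ℝ, x ^ (2*k) ∂(gaussianReal 0 1) = ((2*k-1)‼ : ℝ) := by
  rw [gaussianReal_of_var_ne_zero 0 one_ne_zero]
  rw [show gaussianPDF 0 1 = fun x => ((Real.toNNReal (gaussianPDFReal 0 1 x) : ℝ≥0) : ℝ≥0∞)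
    from rfl]
  rw [integral_withDensity_eq_integral_smul
    ((measurable_gaussianPDFReal 0 1).real_toNNReal)]
  simp only [NNReal.smul_def, smul_eq_mul]
  calc ∫ x : ℝ, ((Real.toNNReal (gaussianPDFReal 0 1 x) : ℝ≥0) : ℝ) * (x ^ (2*k))
      = ∫ x : ℝ, (Real.sqrt (2*Real.pi))⁻¹ * (x ^ (2*k) * Real.exp (-(1/2) * x ^ 2)) := by
        exact integral_congr_ae (ae_of_all _ fun x => gaussPt k x)
    _ = (Real.sqrt (2*Real.pi))⁻¹ * ∫ x : ℝ, x ^ (2*k) * Real.exp (-(1/2) * x ^ 2) := by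
        rw [integral_const_mul]
    _ = ((2*k-1)‼ : ℝ) := by
        rw [gaussMomentAux]
        have hint : ∫ x : ℝ, Real.exp (-(1/2) * x ^ 2) = Real.sqrt (2*Real.pi) := by
          rw [integral_gaussian]
          congr 1
          rw [div_eq_iff (by norm_num : (1/2 : ℝ) ≠ 0)]
          ring
        rw [hint]
        have h2 : Real.sqrt (2*Real.pi) ≠ 0 := by
          positivity
        field_simp

lemma gaussMomentIntegrable (k : ℕ) :
    Integrable (fun x : ℝ => x ^ (2*k)) (gaussianReal 0 1) := by
  rw [gaussianReal_of_var_ne_zero 0 one_ne_zero]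
  rw [show gaussianPDF 0 1 = fun x => ((Real.toNNReal (gaussianPDFReal 0 1 x) : ℝ≥0) : ℝ≥0∞)
    from rfl]
  rw [integrable_withDensity_iff_integrable_smul
    ((measurable_gaussianPDFReal 0 1).real_toNNReal)]
  have : Integrable (fun x : ℝ =>
      (Real.sqrt (2*Real.pi))⁻¹ * (x ^ (2*k) * Real.exp (-(1/2) * x ^ 2))) :=
    (intPowGauss (2*k)).const_mul _
  refine this.congr (ae_of_all _ fun x => ?_)
  simp only [NNReal.smul_def, smul_eq_mul]
  exact (gaussPt k x).symm

lemma jensenPow {N k : ℕ} (hk : 0 < k) (c x : Fin N → ℝ)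
    (hc : ∀ i, 0 ≤ c i) (hx : ∀ i, 0 ≤ x i) :
    (∑ i, c i * x i) ^ k ≤ (∑ i, c i) ^ (k-1) * ∑ i, c i * x i ^ k := by
  have hS0 : 0 ≤ ∑ i, c i := Finset.sum_nonneg fun i _ => hc i
  rcases hS0.eq_or_lt with h | h
  · have hall : ∀ i ∈ Finset.univ, c i = 0 :=
      (Finset.sum_eq_zero_iff_of_nonneg (fun i _ => hc i)).mp h.symm
    have h1 : ∑ i, c i * x i = 0 :=
      Finset.sum_eq_zero fun i hi => by rw [hall i hi, zero_mul]
    have h2 : ∑ i, c i * x i ^ k = 0 :=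
      Finset.sum_eq_zero fun i hi => by rw [hall i hi, zero_mul]
    rw [h1, h2, zero_pow hk.ne', mul_zero]
  · set S := ∑ i, c i with hSdef
    have hj := (convexOn_pow (𝕜 := ℝ) k).map_sum_le (t := Finset.univ)
      (w := fun i => c i / S) (p := x)
      (fun i _ => div_nonneg (hc i) hS0)
      (by rw [← Finset.sum_div, div_self h.ne'])
      (fun i _ => hx i)
    simp only [smul_eq_mul] at hj
    have hmul := mul_le_mul_of_nonneg_left hj (le_of_lt (pow_pos h k))
    have e1 : S ^ k * (∑ i, c i / S * x i) ^ k = (∑ i, c i * x i) ^ k := by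
      rw [← mul_pow, Finset.mul_sum]
      congr 1
      refine Finset.sum_congr rfl fun i _ => ?_
      field_simp
    have e2 : S ^ k * (∑ i, c i / S * x i ^ k) = S ^ (k-1) * ∑ i, c i * x i ^ k := by
      have hkk : S ^ k = S ^ (k-1) * S := by
        rw [← pow_succ]
        congr 1
        omega
      rw [hkk, mul_assoc, Finset.mul_sum]
      congr 1
      refine Finset.sum_congr rfl fun i _ => ?_
      field_simp
    rw [e1, e2] at hmul
    exact hmul

/-- For i.i.d. standard normals `w₁,…,w_N`, nonnegative `λᵢ` and a positive
integer `k`, `E[(Σ λᵢ² wᵢ²)^k] ≤ (2k-1)!! (Σ λᵢ²)^k`. -/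
theorem moment_bound_weighted_chi_sq (N : ℕ) (Ω : Type*) [MeasureSpace Ω]
    [IsProbabilityMeasure (volume : Measure Ω)]
    (w : Fin N → Ω → ℝ) (hmeas : ∀ i, Measurable (w i))
    (hindep : iIndepFun w volume)
    (hdist : ∀ i, Measure.map (w i) volume = gaussianReal 0 1)
    (lam : Fin N → ℝ) (hlam : ∀ i, 0 ≤ lam i) (k : ℕ) (hk : 0 < k) :
    ∫ ω, (∑ i, lam i ^ 2 * w i ω ^ 2) ^ k
      ≤ ((2 * k - 1)‼ : ℝ) * (∑ i, lam i ^ 2) ^ k := by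
  have hInt : ∀ i, Integrable (fun ω => w i ω ^ (2*k)) (volume : Measure Ω) := by
    intro i
    have h1 : Integrable (fun x : ℝ => x ^ (2*k)) (Measure.map (w i) volume) := by
      rw [hdist i]; exact gaussMomentIntegrable k
    have h2 := (integrable_map_measure (g := fun x : ℝ => x ^ (2*k))
      (by fun_prop) (hmeas i).aemeasurable).mp h1
    exact h2
  have hMom : ∀ i, ∫ ω, w i ω ^ (2*k) = ((2*k-1)‼ : ℝ) := by
    intro i
    have h1 : ∫ x : ℝ, x ^ (2*k) ∂(Measure.map (w i) volume) = ((2*k-1)‼ : ℝ) := by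
      rw [hdist i]; exact gaussMoment k
    rw [← h1, integral_map (hmeas i).aemeasurable (by fun_prop)]
  set S := ∑ i, lam i ^ 2 with hS
  have hptle : ∀ ω, (∑ i, lam i ^ 2 * w i ω ^ 2) ^ k
      ≤ ∑ i, S ^ (k-1) * lam i ^ 2 * w i ω ^ (2*k) := by
    intro ω
    have hj := jensenPow hk (fun i => lam i ^ 2) (fun i => w i ω ^ 2)
      (fun i => sq_nonneg _) (fun i => sq_nonneg _)
    calc (∑ i, lam i ^ 2 * w i ω ^ 2) ^ k
        ≤ S ^ (k-1) * ∑ i, lam i ^ 2 * (w i ω ^ 2) ^ k := hj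
      _ = ∑ i, S ^ (k-1) * lam i ^ 2 * w i ω ^ (2*k) := by
          rw [Finset.mul_sum]
          refine Finset.sum_congr rfl fun i _ => ?_
          rw [← pow_mul]
          ring_nf
  have hgInt : Integrable (fun ω => ∑ i, S ^ (k-1) * lam i ^ 2 * w i ω ^ (2*k)) volume :=
    integrable_finset_sum _ fun i _ => ((hInt i).const_mul _)
  have h0 : 0 ≤ᵐ[(volume : Measure Ω)] fun ω => (∑ i, lam i ^ 2 * w i ω ^ 2) ^ k :=
    ae_of_all _ fun ω => pow_nonneg
      (Finset.sum_nonneg fun i _ => mul_nonneg (sq_nonneg _) (sq_nonneg _)) k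
  have hle := integral_mono_of_nonneg h0 hgInt (ae_of_all _ hptle)
  refine hle.trans ?_
  rw [integral_finset_sum _ (fun i _ => (hInt i).const_mul _)]
  have heach : ∀ i ∈ Finset.univ, ∫ ω, S ^ (k-1) * lam i ^ 2 * w i ω ^ (2*k)
      = S ^ (k-1) * lam i ^ 2 * ((2*k-1)‼ : ℝ) := by
    intro i _
    rw [integral_const_mul, hMom i]
  rw [Finset.sum_congr rfl heach]
  have hSk : S ^ (k-1) * S = S ^ k := by
    rw [← pow_succ]
    congr 1
    omega
  have : ∑ i, S ^ (k-1) * lam i ^ 2 * ((2*k-1)‼ : ℝ)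
      = ((2*k-1)‼ : ℝ) * S ^ k := by
    rw [← hSk, hS]
    rw [← Finset.sum_mul, ← Finset.mul_sum]
    ring
  rw [this]
end
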